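/- arXiv:2510.06613 — 2 statements merged into one kernel-verified Lean document; each statement's English description precedes it below -/
import Mathlib

section
/- Let p ≥ q > 0 with pq > 1, and let (u, v) be a positive classical solution of the Lane–Emden system −Δu = v^p, −Δv = u^q on ℝ^n. Assume that either v is bounded or p ≥ 2. Then v(x)^{p+1}/(p+1) ≤ u(x)^{q+1}/(q+1) for every x ∈ ℝ^n. -/
open MeasureTheory Real
open scoped InnerProductSpace

/-- The Laplacian of a function `f : ℝⁿ → ℝ`, as the sum of its second partial
derivatives. -/
noncomputable def lap {n : ℕ} (f : EuclideanSpace ℝ (Fin n) → ℝ)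
    (x : EuclideanSpace ℝ (Fin n)) : ℝ :=
  ∑ i : Fin n, fderiv ℝ (fun y => fderiv ℝ f y (EuclideanSpace.single i 1)) x
    (EuclideanSpace.single i 1)

open Filter

lemma dd_eq {n : ℕ} {f : EuclideanSpace ℝ (Fin n) → ℝ} {x e : EuclideanSpace ℝ (Fin n)}
    {Df : EuclideanSpace ℝ (Fin n) → EuclideanSpace ℝ (Fin n) →L[ℝ] ℝ}
    (h : ∀ᶠ y in nhds x, HasFDerivAt f (Df y) y)
    {D2 : EuclideanSpace ℝ (Fin n) →L[ℝ] ℝ}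
    (h2 : HasFDerivAt (fun y => Df y e) D2 x) :
    fderiv ℝ (fun y => fderiv ℝ f y e) x e = D2 e := by
  have h1 : (fun y => fderiv ℝ f y e) =ᶠ[nhds x] fun y => Df y e :=
    h.mono fun y hy => by simp only [hy.fderiv]
  rw [h1.fderiv_eq, h2.fderiv]

lemma diffAt_fderiv_apply {n : ℕ} {f : EuclideanSpace ℝ (Fin n) → ℝ}
    (hf : ContDiff ℝ 2 f) (x e : EuclideanSpace ℝ (Fin n)) :
    DifferentiableAt ℝ (fun y => fderiv ℝ f y e) x := by
  have h1 : ContDiff ℝ 1 (fderiv ℝ f) := hf.fderiv_right (by norm_num)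
  exact ((h1.differentiable one_ne_zero).clm_apply (differentiable_const e)) x

lemma dd_nonpos_of_isLocalMax {n : ℕ} {F : EuclideanSpace ℝ (Fin n) → ℝ}
    {s : Set (EuclideanSpace ℝ (Fin n))} (hs : IsOpen s)
    (hF : ContDiffOn ℝ 2 F s) {x : EuclideanSpace ℝ (Fin n)} (hx : x ∈ s)
    (hmax : IsLocalMax F x) (e : EuclideanSpace ℝ (Fin n)) :
    fderiv ℝ (fun y => fderiv ℝ F y e) x e ≤ 0 := by
  by_contra hcon
  push_neg at hcon
  -- the line
  set L : ℝ → EuclideanSpace ℝ (Fin n) := fun t => x + t • e with hL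
  have hL0 : L 0 = x := by simp [hL]
  have hLc : Continuous L := by fun_prop
  have hLd : ∀ t : ℝ, HasDerivAt L e t := by
    intro t
    have h1 : HasDerivAt (fun t : ℝ => t • e) ((1:ℝ) • e) t := (hasDerivAt_id t).smul_const e
    simpa [hL] using h1.const_add x
  -- G and its regularity
  set G : EuclideanSpace ℝ (Fin n) → ℝ := fun y => fderiv ℝ F y e with hG
  have hF' := (contDiffOn_succ_iff_fderiv_of_isOpen (n := 1) hs).1 (by exact_mod_cast hF)
  have hGc1 : ContDiffOn ℝ 1 G s := hF'.2.2.clm_apply contDiffOn_const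
  have hG' := (contDiffOn_succ_iff_fderiv_of_isOpen (n := 0) hs).1 (by exact_mod_cast hGc1)
  have hGderivCont : ContinuousOn (fun y => fderiv ℝ G y) s := (contDiffOn_zero.1 hG'.2.2)
  -- χ
  set χ : ℝ → ℝ := fun t => fderiv ℝ G (L t) e with hχ
  have hχ0 : 0 < χ 0 := by simpa [hχ, hL0, hG] using hcon
  have hχcont : ContinuousAt χ 0 := by
    have h1 : ContinuousAt (fun y => fderiv ℝ G y) x := hGderivCont.continuousAt (hs.mem_nhds hx)
    have h2 : ContinuousAt (fun y => fderiv ℝ G y e) x :=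
      (ContinuousLinearMap.apply ℝ ℝ e).continuous.continuousAt.comp h1
    have h3 : ContinuousAt L 0 := hLc.continuousAt
    exact ContinuousAt.comp (by rw [hL0]; exact h2) h3
  -- eventual properties near 0
  have hev : ∀ᶠ t : ℝ in nhds 0, L t ∈ s ∧ F (L t) ≤ F x ∧ 0 < χ t := by
    have h1 : ∀ᶠ t : ℝ in nhds 0, L t ∈ s := by
      have := hLc.continuousAt (x := (0:ℝ))
      exact this (by rw [hL0]; exact hs.mem_nhds hx)
    have h2 : ∀ᶠ t : ℝ in nhds 0, F (L t) ≤ F x := by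
      have := hLc.continuousAt (x := (0:ℝ))
      exact this (by rw [hL0]; exact hmax)
    have h3 : ∀ᶠ t : ℝ in nhds 0, 0 < χ t := hχcont.eventually_const_lt hχ0
    exact h1.and (h2.and h3)
  obtain ⟨ε, hε, hball⟩ := Metric.eventually_nhds_iff.1 hev
  set δ := ε / 2 with hδ
  have hδ0 : 0 < δ := by positivity
  have hIcc : ∀ t ∈ Set.Icc (0:ℝ) δ, L t ∈ s ∧ F (L t) ≤ F x ∧ 0 < χ t := by
    intro t ht
    apply hball
    rw [Real.dist_eq]
    have : |t - 0| ≤ δ := by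
      rw [sub_zero, abs_of_nonneg ht.1]; exact ht.2
    linarith
  -- ψ and derivatives
  set ψ : ℝ → ℝ := fun t => G (L t) with hψ
  have hψd : ∀ t ∈ Set.Icc (0:ℝ) δ, HasDerivAt ψ (χ t) t := by
    intro t ht
    have hmem := (hIcc t ht).1
    have hGdiff : DifferentiableAt ℝ G (L t) :=
      (hGc1.contDiffAt (hs.mem_nhds hmem)).differentiableAt one_ne_zero
    exact hGdiff.hasFDerivAt.comp_hasDerivAt t (hLd t)
  have hφd : ∀ t ∈ Set.Icc (0:ℝ) δ, HasDerivAt (fun t => F (L t)) (ψ t) t := by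
    intro t ht
    have hmem := (hIcc t ht).1
    have hFdiff : DifferentiableAt ℝ F (L t) :=
      (hF.contDiffAt (hs.mem_nhds hmem)).differentiableAt (by norm_num)
    exact hFdiff.hasFDerivAt.comp_hasDerivAt t (hLd t)
  -- ψ 0 = 0
  have hψ0 : ψ 0 = 0 := by
    have hlm : IsLocalMax (fun t => F (L t)) 0 := by
      have h2 : ∀ᶠ t : ℝ in nhds 0, F (L t) ≤ F x := (hev.mono fun t ht => ht.2.1)
      simpa [IsLocalMax, IsMaxFilter, hL0] using h2
    exact hlm.hasDerivAt_eq_zero (hφd 0 ⟨le_rfl, hδ0.le⟩)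
  -- ψ strictly increasing on [0, δ]
  have hψmono : StrictMonoOn ψ (Set.Icc 0 δ) := by
    apply strictMonoOn_of_deriv_pos (convex_Icc 0 δ)
    · intro t ht
      exact (hψd t ht).continuousAt.continuousWithinAt
    · intro t ht
      rw [interior_Icc] at ht
      have ht' : t ∈ Set.Icc (0:ℝ) δ := ⟨ht.1.le, ht.2.le⟩
      rw [(hψd t ht').deriv]
      exact (hIcc t ht').2.2
  have hψpos : ∀ t ∈ Set.Ioo (0:ℝ) δ, 0 < ψ t := by
    intro t ht
    have := hψmono ⟨le_rfl, hδ0.le⟩ ⟨ht.1.le, ht.2.le⟩ ht.1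
    rwa [hψ0] at this
  -- F ∘ L strictly increasing
  have hφmono : StrictMonoOn (fun t => F (L t)) (Set.Icc 0 δ) := by
    apply strictMonoOn_of_deriv_pos (convex_Icc 0 δ)
    · intro t ht
      exact (hφd t ht).continuousAt.continuousWithinAt
    · intro t ht
      rw [interior_Icc] at ht
      have ht' : t ∈ Set.Icc (0:ℝ) δ := ⟨ht.1.le, ht.2.le⟩
      rw [(hφd t ht').deriv]
      exact hψpos t ht
  have hlt : F (L 0) < F (L δ) := hφmono ⟨le_rfl, hδ0.le⟩ ⟨hδ0.le, le_rfl⟩ hδ0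
  have hle : F (L δ) ≤ F x := (hIcc δ ⟨hδ0.le, le_rfl⟩).2.1
  rw [hL0] at hlt
  linarith

variable {n : ℕ}

noncomputable def Nf (x₀ : EuclideanSpace ℝ (Fin n)) : EuclideanSpace ℝ (Fin n) → ℝ :=
  fun y => ∑ j, (y j - x₀ j) * (y j - x₀ j)

noncomputable def DNf (x₀ y : EuclideanSpace ℝ (Fin n)) : EuclideanSpace ℝ (Fin n) →L[ℝ] ℝ :=
  ∑ j, (2 * (y j - x₀ j)) • (EuclideanSpace.proj j)

lemma hasFDerivAt_Nf (x₀ y : EuclideanSpace ℝ (Fin n)) :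
    HasFDerivAt (Nf x₀) (DNf x₀ y) y := by
  apply HasFDerivAt.fun_sum
  intro j _
  have h : HasFDerivAt (𝕜 := ℝ) (fun y : EuclideanSpace ℝ (Fin n) => (y j - x₀ j : ℝ))
      (EuclideanSpace.proj j) y := by
    have h0 : HasFDerivAt (𝕜 := ℝ) (fun z : EuclideanSpace ℝ (Fin n) => (z j : ℝ))
        (EuclideanSpace.proj j) y := (EuclideanSpace.proj (𝕜 := ℝ) j).hasFDerivAt
    exact h0.sub_const ((x₀ j : ℝ))
  have := h.mul h
  have h2 : (y j - x₀ j) • (EuclideanSpace.proj (𝕜 := ℝ) (i := j)) + (y j - x₀ j) • EuclideanSpace.proj j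
      = (2 * (y j - x₀ j)) • (EuclideanSpace.proj (𝕜 := ℝ) (i := j)) := by
    rw [← add_smul]; ring_nf
  rwa [h2] at this

lemma DNf_apply_single (x₀ y : EuclideanSpace ℝ (Fin n)) (i : Fin n) :
    DNf x₀ y (EuclideanSpace.single i 1) = 2 * (y i - x₀ i) := by
  have hpr : ∀ z : EuclideanSpace ℝ (Fin n), ∀ k : Fin n, EuclideanSpace.proj k z = z k := fun _ _ => rfl
  simp [DNf, hpr, EuclideanSpace.single_apply, mul_ite, Finset.sum_ite_eq]

lemma contDiff_Nf (x₀ : EuclideanSpace ℝ (Fin n)) : ContDiff ℝ 2 (Nf x₀) := by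
  apply ContDiff.sum
  intro j _
  have h : ContDiff ℝ 2 (fun y : EuclideanSpace ℝ (Fin n) => (y j - x₀ j : ℝ)) :=
    ((EuclideanSpace.proj (𝕜 := ℝ) j).contDiff).sub contDiff_const
  exact h.mul h

lemma Nf_nonneg (x₀ y : EuclideanSpace ℝ (Fin n)) : 0 ≤ Nf x₀ y :=
  Finset.sum_nonneg fun j _ => mul_self_nonneg _

lemma Nf_self (x₀ : EuclideanSpace ℝ (Fin n)) : Nf x₀ x₀ = 0 := by simp [Nf]

lemma sqrt_Nf_eq_dist (x₀ y : EuclideanSpace ℝ (Fin n)) :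
    Real.sqrt (Nf x₀ y) = dist y x₀ := by
  unfold Nf
  rw [dist_eq_norm, EuclideanSpace.norm_eq]
  congr 1
  apply Finset.sum_congr rfl
  intro j _
  rw [Real.norm_eq_abs, sq_abs]
  have hsub : (y - x₀) j = y j - x₀ j := rfl
  rw [hsub, sq]

lemma lap_sub_comp {n : ℕ} {u v : EuclideanSpace ℝ (Fin n) → ℝ}
    (hu : ContDiff ℝ 2 u) (hv : ContDiff ℝ 2 v) (hu0 : ∀ y, 0 < u y)
    (c σ : ℝ) (x : EuclideanSpace ℝ (Fin n)) :
    lap (fun y => v y - c * u y ^ σ) x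
      = lap v x - (c*σ*(u x)^(σ-1)) * lap u x
        - (c*σ*(σ-1)*(u x)^(σ-2)) * ∑ i : Fin n,
            (fderiv ℝ u x (EuclideanSpace.single i 1))^2 := by
  set Df : EuclideanSpace ℝ (Fin n) → EuclideanSpace ℝ (Fin n) →L[ℝ] ℝ :=
    fun y => fderiv ℝ v y - (c*σ*(u y)^(σ-1)) • fderiv ℝ u y with hDf
  have hud : ∀ y, HasFDerivAt u (fderiv ℝ u y) y :=
    fun y => (hu.differentiable (by norm_num) y).hasFDerivAt
  have hvd : ∀ y, HasFDerivAt v (fderiv ℝ v y) y :=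
    fun y => (hv.differentiable (by norm_num) y).hasFDerivAt
  have h : ∀ y, HasFDerivAt (fun y => v y - c * u y ^ σ) (Df y) y := by
    intro y
    have hg : HasDerivAt (fun t : ℝ => c * t^σ) (c*σ*(u y)^(σ-1)) (u y) := by
      have h0 := (Real.hasDerivAt_rpow_const (p := σ) (Or.inl (hu0 y).ne')).const_mul c
      rwa [show c*(σ*(u y)^(σ-1)) = c*σ*(u y)^(σ-1) by ring] at h0
    have hcomp := hg.comp_hasFDerivAt y (hud y)
    exact (hvd y).sub hcomp
  have key : ∀ i : Fin n,
      fderiv ℝ (fun y => fderiv ℝ (fun y => v y - c * u y ^ σ) y (EuclideanSpace.single i 1)) x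
        (EuclideanSpace.single i 1)
      = fderiv ℝ (fun y => fderiv ℝ v y (EuclideanSpace.single i 1)) x (EuclideanSpace.single i 1)
        - ((c*σ*(u x)^(σ-1)) * (fderiv ℝ (fun y => fderiv ℝ u y (EuclideanSpace.single i 1)) x
            (EuclideanSpace.single i 1))
          + (c*σ*(σ-1)*(u x)^(σ-2)) * (fderiv ℝ u x (EuclideanSpace.single i 1))^2) := by
    intro i
    set e := EuclideanSpace.single i (1:ℝ) with he
    have t2a : HasFDerivAt (fun y => c*σ*(u y)^(σ-1))
        ((c*σ*((σ-1)*(u x)^(σ-1-1))) • fderiv ℝ u x) x :=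
      ((Real.hasDerivAt_rpow_const (p := σ-1) (Or.inl (hu0 x).ne')).const_mul
        (c*σ)).comp_hasFDerivAt x (hud x)
    have t2b : HasFDerivAt (fun y => fderiv ℝ u y e)
        (fderiv ℝ (fun y => fderiv ℝ u y e) x) x := (diffAt_fderiv_apply hu x e).hasFDerivAt
    have T1 : HasFDerivAt (fun y => fderiv ℝ v y e)
        (fderiv ℝ (fun y => fderiv ℝ v y e) x) x := (diffAt_fderiv_apply hv x e).hasFDerivAt
    have hfun : (fun y => Df y e)
        = fun y => fderiv ℝ v y e - (c*σ*(u y)^(σ-1)) * (fderiv ℝ u y e) := by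
      funext y
      simp [hDf, ContinuousLinearMap.sub_apply, ContinuousLinearMap.smul_apply, smul_eq_mul]
    have h2 : HasFDerivAt (fun y => Df y e)
        (fderiv ℝ (fun y => fderiv ℝ v y e) x
          - ((c*σ*(u x)^(σ-1)) • (fderiv ℝ (fun y => fderiv ℝ u y e) x)
            + (fderiv ℝ u x e) • ((c*σ*((σ-1)*(u x)^(σ-1-1))) • fderiv ℝ u x))) x := by
      rw [hfun]
      exact T1.sub (t2a.mul t2b)
    have := dd_eq (f := fun y => v y - c * u y ^ σ) (Filter.Eventually.of_forall h) h2
    rw [this]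
    simp only [ContinuousLinearMap.sub_apply, ContinuousLinearMap.add_apply,
      ContinuousLinearMap.smul_apply, smul_eq_mul]
    rw [show (σ - 1 - 1 : ℝ) = σ - 2 by ring]
    ring
  unfold lap
  rw [Finset.sum_congr rfl (fun i _ => key i)]
  rw [Finset.sum_sub_distrib, Finset.sum_add_distrib, ← Finset.mul_sum, ← Finset.mul_sum]
  ring
open Real

lemma alg {p q σ c a b : ℝ} (hq : 0 < q) (hqp : q ≤ p) (hpq : 1 < p*q)
    (hσ : σ = (q+1)/(p+1)) (hc : c = ((p+1)/(q+1)) ^ ((1:ℝ)/(p+1)))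
    (ha : 0 < a) (hb : 0 < b) (hz : 0 < b - c * a ^ σ) :
    σ * c ^ (1/σ) * (b - c * a ^ σ) ^ (q*(p+1)/(q+1)) ≤ -a ^ q + c*σ*a^(σ-1)*b^p := by
  have hp1 : 1 < p := by nlinarith
  have hp0 : (0:ℝ) < p + 1 := by linarith
  have hq0 : (0:ℝ) < q + 1 := by linarith
  have hσ0 : 0 < σ := by rw [hσ]; positivity
  have hσ1 : σ ≤ 1 := by rw [hσ, div_le_one hp0]; linarith
  have hc0 : 0 < c := by rw [hc]; positivity
  set ζ := b - c * a ^ σ with hζdef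
  set w := c * a ^ σ with hwdef
  have hw0 : 0 < w := by positivity
  have hwb : w < b := by simp only [hζdef] at hz; linarith
  have hζ0 : 0 < ζ := hz
  have hζb : ζ < b := by simp only [hζdef]; linarith
  have hσp1 : σ * (p+1) = q+1 := by rw [hσ]; field_simp
  have hcp1 : c ^ (p+1) = (p+1)/(q+1) := by
    rw [hc, ← Real.rpow_mul (by positivity)]
    rw [show (1:ℝ)/(p+1)*(p+1) = 1 by field_simp, Real.rpow_one]
  -- K1
  have K1 : c*σ*a^(σ-1)*w^p = a^q := by
    have h1 : w ^ p = c ^ p * a ^ (σ*p) := by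
      rw [hwdef, Real.mul_rpow hc0.le (by positivity), Real.rpow_mul ha.le]
    have h2 : a^(σ-1) * a^(σ*p) = a ^ q := by
      rw [← Real.rpow_add ha]
      congr 1
      linarith [hσp1]
    have h3 : c * c ^ p = c ^ (p+1) := by
      rw [Real.rpow_add hc0, Real.rpow_one]; ring
    have h4 : σ * ((p+1)/(q+1)) = 1 := by rw [hσ]; field_simp
    calc c*σ*a^(σ-1)*w^p = σ * (c * c^p) * (a^(σ-1) * a^(σ*p)) := by rw [h1]; ring
      _ = σ * ((p+1)/(q+1)) * a^q := by rw [h3, hcp1, h2]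
      _ = a^q := by rw [h4]; ring
  -- K2
  have K2 : b^(p-1) * ζ ≤ b^p - w^p := by
    have hbp : b^p = b^(p-1) * b := by
      rw [← Real.rpow_add_one hb.ne' (p-1)]; norm_num
    have hwp : w^p = w^(p-1) * w := by
      rw [← Real.rpow_add_one hw0.ne' (p-1)]; norm_num
    have hm : w^(p-1) ≤ b^(p-1) := Real.rpow_le_rpow hw0.le hwb.le (by linarith)
    have : w^(p-1) * w ≤ b^(p-1) * w := mul_le_mul_of_nonneg_right hm hw0.le
    rw [hbp, hwp]
    simp only [hζdef]
    nlinarith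
  -- K3
  have K3 : (b/c)^((σ-1)/σ) ≤ a^(σ-1) := by
    have haσ : a^σ ≤ b/c := by rw [le_div_iff₀ hc0]; nlinarith
    have haX : a ≤ (b/c)^(1/σ) := by
      have h1 : a = (a^σ)^(1/σ) := by
        rw [← Real.rpow_mul ha.le, show σ*(1/σ) = 1 by field_simp, Real.rpow_one]
      rw [h1]
      exact Real.rpow_le_rpow (by positivity) haσ (by positivity)
    have h2 := Real.rpow_le_rpow_of_nonpos ha haX (by linarith : σ-1 ≤ 0)
    calc (b/c)^((σ-1)/σ) = ((b/c)^(1/σ))^(σ-1) := by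
          rw [← Real.rpow_mul (by positivity)]
          congr 1
          field_simp
      _ ≤ a^(σ-1) := h2
  -- K4
  have K4 : c*σ*(b/c)^((σ-1)/σ)*b^(p-1) = σ*c^(1/σ)*b^(p-1/σ) := by
    rw [Real.div_rpow hb.le hc0.le]
    have h0 : (1:ℝ)/σ = 1 - (σ-1)/σ := by field_simp; ring
    have h1 : c / c^((σ-1)/σ) = c^(1/σ) := by
      rw [h0, Real.rpow_sub hc0, Real.rpow_one]
    have h2 : b^((σ-1)/σ) * b^(p-1) = b^(p-1/σ) := by
      rw [← Real.rpow_add hb]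
      congr 1
      field_simp
      ring
    calc c*σ*(b^((σ-1)/σ)/c^((σ-1)/σ))*b^(p-1)
        = σ * (c / c^((σ-1)/σ)) * (b^((σ-1)/σ) * b^(p-1)) := by ring
      _ = σ*c^(1/σ)*b^(p-1/σ) := by rw [h1, h2]
  -- exponent positivity
  have hexp : 0 ≤ p - 1/σ := by
    have : 1/σ = (p+1)/(q+1) := by rw [hσ]; field_simp
    rw [this, sub_nonneg, div_le_iff₀ hq0]
    nlinarith
  have K5 : ζ^(p-1/σ) ≤ b^(p-1/σ) := Real.rpow_le_rpow hζ0.le hζb.le hexp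
  have K6 : ζ^(p-1/σ)*ζ = ζ^(q*(p+1)/(q+1)) := by
    rw [← Real.rpow_add_one hζ0.ne']
    congr 1
    have hσval : 1/σ = (p+1)/(q+1) := by rw [hσ]; field_simp
    rw [hσval]
    field_simp
    ring
  -- chain
  have hpos1 : 0 ≤ σ*c^(1/σ) := by positivity
  have C1 : σ*c^(1/σ)*ζ^(q*(p+1)/(q+1)) ≤ σ*c^(1/σ)*(b^(p-1/σ)*ζ) := by
    have h' : ζ^(p-1/σ)*ζ ≤ b^(p-1/σ)*ζ := mul_le_mul_of_nonneg_right K5 hζ0.le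
    calc σ*c^(1/σ)*ζ^(q*(p+1)/(q+1)) = (σ*c^(1/σ))*(ζ^(p-1/σ)*ζ) := by rw [K6]
      _ ≤ (σ*c^(1/σ))*(b^(p-1/σ)*ζ) := mul_le_mul_of_nonneg_left h' hpos1
      _ = σ*c^(1/σ)*(b^(p-1/σ)*ζ) := by ring
  have C2 : σ*c^(1/σ)*(b^(p-1/σ)*ζ) = c*σ*(b/c)^((σ-1)/σ)*b^(p-1)*ζ := by rw [K4]; ring
  have C3 : c*σ*(b/c)^((σ-1)/σ)*b^(p-1)*ζ ≤ c*σ*a^(σ-1)*b^(p-1)*ζ := by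
    have hpos : 0 ≤ c*σ*b^(p-1)*ζ := by positivity
    calc c*σ*(b/c)^((σ-1)/σ)*b^(p-1)*ζ = (b/c)^((σ-1)/σ)*(c*σ*b^(p-1)*ζ) := by ring
      _ ≤ a^(σ-1)*(c*σ*b^(p-1)*ζ) := mul_le_mul_of_nonneg_right K3 hpos
      _ = c*σ*a^(σ-1)*b^(p-1)*ζ := by ring
  have C4 : c*σ*a^(σ-1)*b^(p-1)*ζ ≤ c*σ*a^(σ-1)*(b^p - w^p) := by
    have hpos : 0 ≤ c*σ*a^(σ-1) := by positivity
    calc c*σ*a^(σ-1)*b^(p-1)*ζ = (c*σ*a^(σ-1))*(b^(p-1)*ζ) := by ring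
      _ ≤ (c*σ*a^(σ-1))*(b^p - w^p) := mul_le_mul_of_nonneg_left K2 hpos
      _ = c*σ*a^(σ-1)*(b^p - w^p) := by ring
  have C5 : c*σ*a^(σ-1)*(b^p - w^p) = -a^q + c*σ*a^(σ-1)*b^p := by
    rw [mul_sub]
    rw [show c*σ*a^(σ-1)*w^p = a^q from K1]
    ring
  exact le_trans C1 (le_trans (le_of_eq C2) (le_trans C3 (le_trans C4 (le_of_eq C5))))

lemma ko {n : ℕ} (z : EuclideanSpace ℝ (Fin n) → ℝ) (hz : ContDiff ℝ 2 z)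
    (c₂ m : ℝ) (hc₂ : 0 < c₂) (hm : 1 < m)
    (hineq : ∀ x, 0 < z x → c₂ * z x ^ m ≤ lap z x) :
    ∀ x, z x ≤ 0 := by
  intro x₀
  set α : ℝ := 2/(m-1) with hαdef
  have hm1 : 0 < m - 1 := by linarith
  have hα0 : 0 < α := by positivity
  have hαm : α * m = α + 2 := by rw [hαdef]; field_simp; ring
  set Cα : ℝ := 2*n*α + 4*α*(α+1) with hCαdef
  have hCα0 : 0 < Cα := by positivity
  have claim : ∀ ρ : ℝ, 0 < ρ → z x₀ ≤ (Cα/c₂)^(1/(m-1)) * ρ^(-(1/(m-1))) := by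
    intro ρ hρ
    by_contra hcon
    push_neg at hcon
    set A : ℝ := (Cα*ρ/c₂)^(1/(m-1)) with hAdef
    have hA0 : 0 < A := by positivity
    have hAm1 : A^(m-1) = Cα*ρ/c₂ := by
      rw [hAdef, ← Real.rpow_mul (by positivity),
        show 1/(m-1)*(m-1) = 1 by field_simp, Real.rpow_one]
    have hAm : c₂ * A^m = Cα*ρ*A := by
      have h1 : A^m = A^(m-1) * A := by
        rw [← Real.rpow_add_one hA0.ne' (m-1)]; norm_num
      rw [h1, hAm1]; field_simp
    set V : EuclideanSpace ℝ (Fin n) → ℝ := fun y => A * (ρ - Nf x₀ y)^(-α) with hVdef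
    have hVx₀val : V x₀ = A * ρ^(-α) := by rw [hVdef]; simp [Nf_self]
    have hVx₀ : V x₀ = (Cα/c₂)^(1/(m-1)) * ρ^(-(1/(m-1))) := by
      have hexp : 1/(m-1) + -α = -(1/(m-1)) := by rw [hαdef]; ring
      rw [hVx₀val, hAdef, show Cα*ρ/c₂ = (Cα/c₂)*ρ by ring,
        Real.mul_rpow (by positivity) hρ.le, mul_assoc, ← Real.rpow_add hρ, hexp]
    have hVx₀pos : 0 < V x₀ := by rw [hVx₀val]; positivity
    have hd : 0 < z x₀ - V x₀ := by rw [hVx₀]; linarith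
    -- max of z on closed ball
    obtain ⟨yM, hyMmem, hyM⟩ := (isCompact_closedBall x₀ (Real.sqrt ρ)).exists_isMaxOn
      ⟨x₀, Metric.mem_closedBall_self (Real.sqrt_nonneg ρ)⟩ (hz.continuous.continuousOn)
    set Mz := z yM with hMzdef
    have hMzx₀ : z x₀ ≤ Mz := hyM (Metric.mem_closedBall_self (Real.sqrt_nonneg ρ))
    have hMz0 : 0 < Mz := lt_of_lt_of_le (by linarith) hMzx₀
    have hball_of_N : ∀ y, Nf x₀ y ≤ ρ → z y ≤ Mz := by
      intro y hy
      apply hyM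
      rw [Metric.mem_closedBall, ← sqrt_Nf_eq_dist]
      exact Real.sqrt_le_sqrt hy
    -- choice of δ
    set δ : ℝ := min ρ ((A/(Mz+1))^(1/α)) with hδdef
    have hδ0 : 0 < δ := lt_min hρ (by positivity)
    have hδρ : δ ≤ ρ := min_le_left _ _
    have hbarrier : ∀ y, ρ - Nf x₀ y ≤ δ → 0 < ρ - Nf x₀ y → z y - V y < 0 := by
      intro y h1 h2
      have hNy : Nf x₀ y ≤ ρ := by linarith
      have hzy : z y ≤ Mz := hball_of_N y hNy
      have hf : (ρ - Nf x₀ y) ≤ (A/(Mz+1))^(1/α) := le_trans h1 (min_le_right _ _)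
      have hfα : (ρ - Nf x₀ y)^α ≤ A/(Mz+1) := by
        calc (ρ - Nf x₀ y)^α ≤ ((A/(Mz+1))^(1/α))^α := Real.rpow_le_rpow h2.le hf hα0.le
          _ = A/(Mz+1) := by
            rw [← Real.rpow_mul (by positivity), show 1/α*α = 1 by field_simp, Real.rpow_one]
      have hfpos : 0 < (ρ - Nf x₀ y)^α := Real.rpow_pos_of_pos h2 α
      have h3 : (Mz+1) * (ρ - Nf x₀ y)^α ≤ A := by
        calc (Mz+1)*(ρ-Nf x₀ y)^α ≤ (Mz+1)*(A/(Mz+1)) :=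
              mul_le_mul_of_nonneg_left hfα (by positivity)
          _ = A := by field_simp
      have hVy : Mz + 1 ≤ V y := by
        rw [hVdef]
        calc Mz + 1 ≤ A / (ρ - Nf x₀ y)^α := (le_div_iff₀ hfpos).2 h3
          _ = A * (ρ - Nf x₀ y)^(-α) := by rw [Real.rpow_neg h2.le]; ring
      linarith
    -- compact set K and max point
    set K := {y : EuclideanSpace ℝ (Fin n) | Nf x₀ y ≤ ρ - δ} with hKdef
    have hNcont : Continuous (Nf x₀) := (contDiff_Nf x₀).continuous
    have hKclosed : IsClosed K := isClosed_le hNcont continuous_const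
    have hKsub : K ⊆ Metric.closedBall x₀ (Real.sqrt ρ) := by
      intro y hy
      have hy' : Nf x₀ y ≤ ρ - δ := hy
      rw [Metric.mem_closedBall, ← sqrt_Nf_eq_dist]
      exact Real.sqrt_le_sqrt (by linarith)
    have hKcomp : IsCompact K := (isCompact_closedBall _ _).of_isClosed_subset hKclosed hKsub
    have hx₀K : x₀ ∈ K := by
      show Nf x₀ x₀ ≤ ρ - δ
      rw [Nf_self]; linarith
    have hVcontOn : ContinuousOn V K := by
      intro y hy
      have hy' : Nf x₀ y ≤ ρ - δ := hy
      have h2 : (0:ℝ) < ρ - Nf x₀ y := by linarith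
      apply ContinuousAt.continuousWithinAt
      have hc1 : ContinuousAt (fun y => (ρ - Nf x₀ y)) y := (continuous_const.sub hNcont).continuousAt
      have hc2 : ContinuousAt (fun t : ℝ => t ^ (-α)) (ρ - Nf x₀ y) :=
        Real.continuousAt_rpow_const _ _ (Or.inl h2.ne')
      exact continuousAt_const.mul (ContinuousAt.comp (f := fun y => ρ - Nf x₀ y) (g := fun t : ℝ => t ^ (-α)) hc2 hc1)
    set W : EuclideanSpace ℝ (Fin n) → ℝ := fun y => z y - V y with hWdef
    obtain ⟨x₁, hx₁K, hx₁max⟩ := hKcomp.exists_isMaxOn ⟨x₀, hx₀K⟩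
      ((hz.continuous.continuousOn).sub hVcontOn)
    have hNx₁ : Nf x₀ x₁ ≤ ρ - δ := hx₁K
    have hN₁0 : 0 ≤ Nf x₀ x₁ := Nf_nonneg x₀ x₁
    have hf₁0 : 0 < ρ - Nf x₀ x₁ := by linarith
    have hf₁ρ : ρ - Nf x₀ x₁ ≤ ρ := by linarith
    have hN₁ρ : Nf x₀ x₁ ≤ ρ := by linarith
    have hWx₁ : z x₀ - V x₀ ≤ W x₁ := hx₁max hx₀K
    have hWx₁pos : 0 < W x₁ := lt_of_lt_of_le hd hWx₁
    have hVx₁pos : 0 < V x₁ := by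
      rw [hVdef]
      positivity
    have hzx₁ : V x₁ < z x₁ := by
      have : W x₁ = z x₁ - V x₁ := rfl
      linarith [hWx₁pos, this ▸ hWx₁pos]
    -- local max over open set U
    set U := {y : EuclideanSpace ℝ (Fin n) | Nf x₀ y < ρ - δ/2} with hUdef
    have hUopen : IsOpen U := isOpen_lt hNcont continuous_const
    have hx₁U : x₁ ∈ U := by
      show Nf x₀ x₁ < ρ - δ/2
      linarith
    have hUf : ∀ y ∈ U, 0 < ρ - Nf x₀ y := by
      intro y hy
      have : Nf x₀ y < ρ - δ/2 := hy
      linarith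
    have hlocmax : IsLocalMax W x₁ := by
      filter_upwards [hUopen.mem_nhds hx₁U] with y hy
      by_cases hyK : Nf x₀ y ≤ ρ - δ
      · exact hx₁max hyK
      · push_neg at hyK
        have hy' : Nf x₀ y < ρ - δ/2 := hy
        have hlt := hbarrier y (by linarith) (by linarith)
        show W y ≤ W x₁
        have : W y = z y - V y := rfl
        linarith
    -- regularity of W on U
    have hVcdU : ∀ y ∈ U, ContDiffAt ℝ 2 V y := by
      intro y hy
      have h2 := hUf y hy
      have h1 : ContDiffAt ℝ 2 (fun y => ρ - Nf x₀ y) y :=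
        contDiffAt_const.sub (contDiff_Nf x₀).contDiffAt
      exact contDiffAt_const.mul (h1.rpow_const_of_ne h2.ne')
    have hWcd : ContDiffOn ℝ 2 W U := fun y hy =>
      (hz.contDiffAt.sub (hVcdU y hy)).contDiffWithinAt
    -- derivative data
    set Df := fun y => fderiv ℝ z y - (A*α*(ρ - Nf x₀ y)^(-α-1)) • DNf x₀ y with hDfdef
    have hDfev : ∀ᶠ y in nhds x₁, HasFDerivAt W (Df y) y := by
      filter_upwards [hUopen.mem_nhds hx₁U] with y hy
      have h2 := hUf y hy
      have hgV : HasDerivAt (fun t : ℝ => A * (ρ - t)^(-α))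
          (A*α*(ρ - Nf x₀ y)^(-α-1)) (Nf x₀ y) := by
        have hin : HasDerivAt (fun t : ℝ => ρ - t) (-1) (Nf x₀ y) :=
          (hasDerivAt_id _).const_sub ρ
        have hout : HasDerivAt (fun s : ℝ => s^(-α)) (-α * (ρ - Nf x₀ y)^(-α-1)) (ρ - Nf x₀ y) :=
          Real.hasDerivAt_rpow_const (Or.inl h2.ne')
        have hcomp := (hout.comp (Nf x₀ y) hin).const_mul A
        rwa [show A * (-α * (ρ - Nf x₀ y)^(-α-1) * -1) = A*α*(ρ - Nf x₀ y)^(-α-1) by ring]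
          at hcomp
      have hV : HasFDerivAt V ((A*α*(ρ - Nf x₀ y)^(-α-1)) • DNf x₀ y) y :=
        hgV.comp_hasFDerivAt y (hasFDerivAt_Nf x₀ y)
      exact ((hz.differentiable (by norm_num) y).hasFDerivAt).sub hV
    -- second derivative identity in each direction
    have key : ∀ i : Fin n,
        fderiv ℝ (fun y => fderiv ℝ W y (EuclideanSpace.single i 1)) x₁ (EuclideanSpace.single i 1)
        = fderiv ℝ (fun y => fderiv ℝ z y (EuclideanSpace.single i 1)) x₁
            (EuclideanSpace.single i 1)
          - ((A*α*(ρ - Nf x₀ x₁)^(-α-1)) * 2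
            + (A*α*(α+1)*(ρ - Nf x₀ x₁)^(-α-2)) * (2*(x₁ i - x₀ i))^2) := by
      intro i
      set e := EuclideanSpace.single i (1:ℝ) with he
      have hfun : (fun y => Df y e)
          = fun y => fderiv ℝ z y e - (A*α*(ρ - Nf x₀ y)^(-α-1)) * (2*(y i - x₀ i)) := by
        funext y
        simp only [hDfdef, ContinuousLinearMap.sub_apply, ContinuousLinearMap.smul_apply,
          smul_eq_mul, he, DNf_apply_single]
      have T1 : HasFDerivAt (fun y => fderiv ℝ z y e)
          (fderiv ℝ (fun y => fderiv ℝ z y e) x₁) x₁ :=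
        (diffAt_fderiv_apply hz x₁ e).hasFDerivAt
      have t2a : HasFDerivAt (fun y => A*α*(ρ - Nf x₀ y)^(-α-1))
          ((A*α*(α+1)*(ρ - Nf x₀ x₁)^(-α-2)) • DNf x₀ x₁) x₁ := by
        have hin : HasDerivAt (fun t : ℝ => ρ - t) (-1) (Nf x₀ x₁) :=
          (hasDerivAt_id _).const_sub ρ
        have hout : HasDerivAt (fun s : ℝ => s^(-α-1))
            ((-α-1) * (ρ - Nf x₀ x₁)^(-α-1-1)) (ρ - Nf x₀ x₁) :=
          Real.hasDerivAt_rpow_const (Or.inl hf₁0.ne')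
        have hcomp := ((hout.comp (Nf x₀ x₁) hin).const_mul (A*α)).comp_hasFDerivAt x₁
          (hasFDerivAt_Nf x₀ x₁)
        rwa [show A*α*((-α-1) * (ρ - Nf x₀ x₁)^(-α-1-1) * -1)
            = A*α*(α+1)*(ρ - Nf x₀ x₁)^(-α-2) by
          rw [show (-α-1-1 : ℝ) = -α-2 by ring]; ring] at hcomp
      have t2b : HasFDerivAt (𝕜 := ℝ)
          (fun y : EuclideanSpace ℝ (Fin n) => (2*(y i - x₀ i) : ℝ))
          ((2:ℝ) • EuclideanSpace.proj i) x₁ := by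
        have h0 : HasFDerivAt (𝕜 := ℝ) (fun y : EuclideanSpace ℝ (Fin n) => (y i - x₀ i : ℝ))
            (EuclideanSpace.proj i) x₁ :=
          ((EuclideanSpace.proj (𝕜 := ℝ) i).hasFDerivAt).sub_const ((x₀ i : ℝ))
        exact h0.const_mul (2:ℝ)
      have h2' : HasFDerivAt (fun y => Df y e)
          (fderiv ℝ (fun y => fderiv ℝ z y e) x₁
            - ((A*α*(ρ - Nf x₀ x₁)^(-α-1)) • ((2:ℝ) • EuclideanSpace.proj i)
              + (2*(x₁ i - x₀ i)) • ((A*α*(α+1)*(ρ - Nf x₀ x₁)^(-α-2)) • DNf x₀ x₁))) x₁ := by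
        rw [hfun]
        exact T1.sub (t2a.mul t2b)
      have hdd := dd_eq hDfev h2'
      rw [hdd]
      have hpr : (EuclideanSpace.proj (𝕜 := ℝ) i) e = 1 := by
        show (e : EuclideanSpace ℝ (Fin n)) i = 1
        rw [he]
        simp [EuclideanSpace.single_apply]
      have hDN : DNf x₀ x₁ e = 2*(x₁ i - x₀ i) := by rw [he]; exact DNf_apply_single _ _ _
      simp only [ContinuousLinearMap.sub_apply, ContinuousLinearMap.add_apply,
        ContinuousLinearMap.smul_apply, smul_eq_mul, hpr, hDN]
      ring
    -- sum up
    have hsum : ∑ i : Fin n, fderiv ℝ (fun y => fderiv ℝ W y (EuclideanSpace.single i 1)) x₁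
        (EuclideanSpace.single i 1) ≤ 0 :=
      Finset.sum_nonpos fun i _ => dd_nonpos_of_isLocalMax hUopen hWcd hx₁U hlocmax _
    rw [Finset.sum_congr rfl (fun i _ => key i), Finset.sum_sub_distrib,
      Finset.sum_add_distrib] at hsum
    have hsc : ∑ _i : Fin n, (A*α*(ρ - Nf x₀ x₁)^(-α-1)) * 2
        = n * ((A*α*(ρ - Nf x₀ x₁)^(-α-1)) * 2) := by
      rw [Finset.sum_const, Finset.card_univ, Fintype.card_fin, nsmul_eq_mul]
    have hsq : ∑ i : Fin n, (A*α*(α+1)*(ρ - Nf x₀ x₁)^(-α-2)) * (2*(x₁ i - x₀ i))^2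
        = 4*(A*α*(α+1)*(ρ - Nf x₀ x₁)^(-α-2)) * Nf x₀ x₁ := by
      set C := A*α*(α+1)*(ρ - Nf x₀ x₁)^(-α-2) with hCdef
      conv_rhs => rw [show Nf x₀ x₁ = ∑ j, (x₁ j - x₀ j) * (x₁ j - x₀ j) from rfl,
        Finset.mul_sum]
      apply Finset.sum_congr rfl
      intro j _
      ring
    rw [hsc, hsq] at hsum
    have hlapz : lap z x₁ ≤ n * ((A*α*(ρ - Nf x₀ x₁)^(-α-1)) * 2)
        + 4*(A*α*(α+1)*(ρ - Nf x₀ x₁)^(-α-2)) * Nf x₀ x₁ := by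
      have : lap z x₁ = ∑ i : Fin n, fderiv ℝ
          (fun y => fderiv ℝ z y (EuclideanSpace.single i 1)) x₁ (EuclideanSpace.single i 1) := rfl
      linarith [hsum, this ▸ hsum]
    -- barrier estimate
    have hfp2 : 0 < (ρ - Nf x₀ x₁)^(-α-2) := Real.rpow_pos_of_pos hf₁0 _
    have hsplit : (ρ - Nf x₀ x₁)^(-α-1) = (ρ - Nf x₀ x₁)^(-α-2) * (ρ - Nf x₀ x₁) := by
      rw [← Real.rpow_add_one hf₁0.ne']
      congr 1
      ring
    have hB : n * ((A*α*(ρ - Nf x₀ x₁)^(-α-1)) * 2)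
        + 4*(A*α*(α+1)*(ρ - Nf x₀ x₁)^(-α-2)) * Nf x₀ x₁
        ≤ Cα * ρ * A * (ρ - Nf x₀ x₁)^(-α-2) := by
      have h1 : n * ((A*α*(ρ - Nf x₀ x₁)^(-α-1)) * 2)
          = (2*n*A*α) * ((ρ - Nf x₀ x₁) * (ρ - Nf x₀ x₁)^(-α-2)) := by
        rw [hsplit]; ring
      have h2 : (2*n*A*α) * ((ρ - Nf x₀ x₁) * (ρ - Nf x₀ x₁)^(-α-2))
          ≤ (2*n*A*α) * (ρ * (ρ - Nf x₀ x₁)^(-α-2)) := by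
        apply mul_le_mul_of_nonneg_left _ (by positivity)
        exact mul_le_mul_of_nonneg_right hf₁ρ hfp2.le
      have h3 : 4*(A*α*(α+1)*(ρ - Nf x₀ x₁)^(-α-2)) * Nf x₀ x₁
          ≤ 4*(A*α*(α+1)*(ρ - Nf x₀ x₁)^(-α-2)) * ρ :=
        mul_le_mul_of_nonneg_left hN₁ρ (by positivity)
      calc n * ((A*α*(ρ - Nf x₀ x₁)^(-α-1)) * 2)
          + 4*(A*α*(α+1)*(ρ - Nf x₀ x₁)^(-α-2)) * Nf x₀ x₁
          ≤ (2*n*A*α) * (ρ * (ρ - Nf x₀ x₁)^(-α-2))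
            + 4*(A*α*(α+1)*(ρ - Nf x₀ x₁)^(-α-2)) * ρ := by
            rw [h1] at *
            exact add_le_add h2 h3
        _ = Cα * ρ * A * (ρ - Nf x₀ x₁)^(-α-2) := by
            rw [hCαdef]; ring
    have hVm : Cα * ρ * A * (ρ - Nf x₀ x₁)^(-α-2) = c₂ * (V x₁)^m := by
      have hVx₁val : V x₁ = A * (ρ - Nf x₀ x₁)^(-α) := rfl
      have hexp2 : (-α)*m = -α-2 := by linear_combination -hαm
      have h1 : (V x₁)^m = A^m * (ρ - Nf x₀ x₁)^(-α-2) := by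
        rw [hVx₁val, Real.mul_rpow hA0.le (Real.rpow_nonneg hf₁0.le _),
          ← Real.rpow_mul hf₁0.le, hexp2]
      rw [h1, ← mul_assoc, hAm]
    have hlt : c₂ * (V x₁)^m < c₂ * (z x₁)^m :=
      mul_lt_mul_of_pos_left (Real.rpow_lt_rpow hVx₁pos.le hzx₁ (by linarith)) hc₂
    have hzineq := hineq x₁ (lt_trans hVx₁pos hzx₁)
    linarith
  by_contra hzx
  push_neg at hzx
  have htend : Filter.Tendsto (fun ρ : ℝ => (Cα/c₂)^(1/(m-1)) * ρ^(-(1/(m-1))))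
      Filter.atTop (nhds ((Cα/c₂)^(1/(m-1)) * 0)) :=
    (tendsto_rpow_neg_atTop (by positivity)).const_mul _
  rw [mul_zero] at htend
  have hev := htend.eventually_lt_const hzx
  obtain ⟨ρ, hρpos, hρlt⟩ := ((Filter.eventually_gt_atTop (0:ℝ)).and hev).exists
  exact absurd (claim ρ hρpos) (not_le.2 hρlt)

theorem component_comparison (n : ℕ) (p q : ℝ) (hq : 0 < q) (hqp : q ≤ p)
    (hpq : 1 < p * q)
    (u v : EuclideanSpace ℝ (Fin n) → ℝ)
    (hu : ContDiff ℝ 2 u) (hv : ContDiff ℝ 2 v)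
    (hu0 : ∀ x, 0 < u x) (hv0 : ∀ x, 0 < v x)
    (hue : ∀ x, -lap u x = v x ^ p) (hve : ∀ x, -lap v x = u x ^ q)
    (hbd : (∃ M : ℝ, ∀ x, v x ≤ M) ∨ 2 ≤ p) :
    ∀ x, v x ^ (p + 1) / (p + 1) ≤ u x ^ (q + 1) / (q + 1) := by
  set σ : ℝ := (q+1)/(p+1) with hσdef
  have hp1 : 1 < p := by nlinarith
  have hp0 : (0:ℝ) < p+1 := by linarith
  have hq0 : (0:ℝ) < q+1 := by linarith
  have hσ0 : 0 < σ := by positivity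
  set c : ℝ := ((p+1)/(q+1))^((1:ℝ)/(p+1)) with hcdef
  have hc0 : 0 < c := by positivity
  have hm1 : 1 < q*(p+1)/(q+1) := by
    rw [lt_div_iff₀ hq0]; nlinarith
  have hc₂0 : 0 < σ * c^(1/σ) := by positivity
  have hzsm : ContDiff ℝ 2 (fun y => v y - c * (u y)^σ) := by
    apply hv.sub
    apply contDiff_iff_contDiffAt.2
    intro y
    exact contDiffAt_const.mul (hu.contDiffAt.rpow_const_of_ne (hu0 y).ne')
  have hlapu : ∀ x, lap u x = -(v x ^ p) := fun x => by have := hue x; linarith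
  have hlapv : ∀ x, lap v x = -(u x ^ q) := fun x => by have := hve x; linarith
  have hineq : ∀ x, 0 < (fun y => v y - c * (u y)^σ) x →
      σ * c^(1/σ) * ((fun y => v y - c * (u y)^σ) x) ^ (q*(p+1)/(q+1))
        ≤ lap (fun y => v y - c * (u y)^σ) x := by
    intro x hzx
    have hzx' : 0 < v x - c * (u x)^σ := hzx
    have hS : 0 ≤ ∑ i : Fin n, (fderiv ℝ u x (EuclideanSpace.single i 1))^2 :=
      Finset.sum_nonneg fun i _ => sq_nonneg _
    have hlz := lap_sub_comp hu hv hu0 c σ x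
    rw [hlapv x, hlapu x] at hlz
    have halg := alg hq hqp hpq hσdef hcdef (hu0 x) (hv0 x) hzx'
    have hterm : 0 ≤ -(c*σ*(σ-1)*(u x)^(σ-2)) *
        ∑ i : Fin n, (fderiv ℝ u x (EuclideanSpace.single i 1))^2 := by
      have hσ1 : σ ≤ 1 := by rw [hσdef, div_le_one hp0]; linarith
      have h1 : 0 ≤ c*σ*(1-σ)*(u x)^(σ-2) :=
        mul_nonneg (mul_nonneg (mul_nonneg hc0.le hσ0.le) (by linarith))
          (Real.rpow_nonneg (hu0 x).le _)
      have := mul_nonneg h1 hS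
      calc (0:ℝ) ≤ (c*σ*(1-σ)*(u x)^(σ-2)) *
            ∑ i : Fin n, (fderiv ℝ u x (EuclideanSpace.single i 1))^2 := this
        _ = -(c*σ*(σ-1)*(u x)^(σ-2)) *
            ∑ i : Fin n, (fderiv ℝ u x (EuclideanSpace.single i 1))^2 := by ring
    show σ * c^(1/σ) * (v x - c * (u x)^σ) ^ (q*(p+1)/(q+1))
        ≤ lap (fun y => v y - c * (u y)^σ) x
    rw [hlz]
    linarith
  have hz0 := ko (fun y => v y - c * (u y)^σ) hzsm (σ * c^(1/σ)) (q*(p+1)/(q+1))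
    hc₂0 hm1 hineq
  intro x
  have hvc : v x ≤ c * (u x) ^ σ := by
    have := hz0 x
    linarith
  have hcp1 : c^(p+1) = (p+1)/(q+1) := by
    rw [hcdef, ← Real.rpow_mul (by positivity),
      show (1:ℝ)/(p+1)*(p+1) = 1 by field_simp, Real.rpow_one]
  have h1 : v x ^ (p+1) ≤ (c * (u x) ^ σ)^(p+1) :=
    Real.rpow_le_rpow (hv0 x).le hvc (by linarith)
  have h2 : (c * (u x) ^ σ)^(p+1) = ((p+1)/(q+1)) * u x ^ (q+1) := by
    rw [Real.mul_rpow hc0.le (Real.rpow_nonneg (hu0 x).le _), hcp1,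
      ← Real.rpow_mul (hu0 x).le, show σ*(p+1) = q+1 by rw [hσdef]; field_simp]
  have h3 : v x ^(p+1) ≤ ((p+1)/(q+1)) * u x^(q+1) := h1.trans_eq h2
  rw [div_le_div_iff₀ hp0 hq0]
  have h4 := mul_le_mul_of_nonneg_right h3 hq0.le
  calc v x ^(p+1) * (q+1) ≤ (((p+1)/(q+1)) * u x^(q+1)) * (q+1) := h4
    _ = u x^(q+1) * (p+1) := by field_simp
end

section
/- Let p, q > 0 and let r, s ∈ ℝ with r ∉ {−1, −2}. Let (u, v) be a positive classical solution of the Lane–Emden system −Δu = v^p, −Δv = u^q on ℝ^n. Then for every φ ∈ C_c²(ℝ^n): ∫ u^r v^s |∇u|² φ − (s(s−1)/((r+1)(r+2))) ∫ u^{r+2} v^{s−2} |∇v|² φ = (1/(r+1)) ∫ u^{r+1} v^{p+s} φ − (s/((r+1)(r+2))) ∫ u^{r+q+2} v^{s−1} φ + I₂, where I₂ = −(1/(r+1)) ∫ u^{r+1} v^s (∇u·∇φ) + (s/((r+1)(r+2))) ∫ u^{r+2} v^{s−1} (∇v·∇φ), all integrals being over ℝ^n. -/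
open MeasureTheory Real
open scoped InnerProductSpace

variable {n : ℕ}
local notation "E" => EuclideanSpace ℝ (Fin n)

lemma inner_gradient (f : E → ℝ) (x y : E) : ⟪gradient f x, y⟫_ℝ = fderiv ℝ f x y := by
  simp [gradient, ← InnerProductSpace.toDual_apply_apply]

lemma inner_grad_grad (f g : E → ℝ) (x : E) :
    ⟪gradient f x, gradient g x⟫_ℝ
      = ∑ i : Fin n, fderiv ℝ f x (EuclideanSpace.single i 1)
          * fderiv ℝ g x (EuclideanSpace.single i 1) := by
  rw [PiLp.inner_apply]
  congr 1
  ext i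
  rw [show gradient f x i = ⟪gradient f x, EuclideanSpace.single i 1⟫_ℝ by
        rw [EuclideanSpace.inner_single_right]; simp,
      show gradient g x i = ⟪gradient g x, EuclideanSpace.single i 1⟫_ℝ by
        rw [EuclideanSpace.inner_single_right]; simp,
      inner_gradient, inner_gradient]
  simp [mul_comm]

lemma ibp (w F : E → ℝ) (hw : ContDiff ℝ 2 w) (hF : ContDiff ℝ 1 F)
    (hFc : HasCompactSupport F) :
    ∫ x, ⟪gradient w x, gradient F x⟫_ℝ = ∫ x, (-lap w x) * F x := by
  have hwd : Differentiable ℝ w := hw.differentiable two_ne_zero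
  have hFd : Differentiable ℝ F := hF.differentiable one_ne_zero
  -- continuity facts
  have hcw : ∀ i : Fin n, Continuous fun x => fderiv ℝ w x (EuclideanSpace.single i 1) :=
    fun i => (hw.continuous_fderiv two_ne_zero).clm_apply continuous_const
  have hcF : ∀ i : Fin n, Continuous fun x => fderiv ℝ F x (EuclideanSpace.single i 1) :=
    fun i => (hF.continuous_fderiv one_ne_zero).clm_apply continuous_const
  have hdw : ∀ i : Fin n, Differentiable ℝ fun x => fderiv ℝ w x (EuclideanSpace.single i 1) := by
    intro i
    have h1 : ContDiff ℝ 1 fun x => fderiv ℝ w x (EuclideanSpace.single i 1) := by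
      exact ContDiff.clm_apply (hw.fderiv_right (m := 1) (by norm_num))
        (contDiff_const (c := EuclideanSpace.single i 1))
    exact h1.differentiable one_ne_zero
  have hcw2 : ∀ i : Fin n,
      Continuous fun x =>
        fderiv ℝ (fun y => fderiv ℝ w y (EuclideanSpace.single i 1)) x
          (EuclideanSpace.single i 1) := by
    intro i
    have h1 : ContDiff ℝ 1 fun x => fderiv ℝ w x (EuclideanSpace.single i 1) :=
      ContDiff.clm_apply (hw.fderiv_right (m := 1) (by norm_num))
        (contDiff_const (c := EuclideanSpace.single i 1))
    exact (h1.continuous_fderiv one_ne_zero).clm_apply continuous_const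
  -- compact support facts
  have hFc' : ∀ i : Fin n,
      HasCompactSupport fun x => fderiv ℝ F x (EuclideanSpace.single i 1) := fun i =>
    hFc.fderiv_apply ℝ _
  have hint1 : ∀ i : Fin n,
      Integrable (fun x => fderiv ℝ w x (EuclideanSpace.single i 1)
        * fderiv ℝ F x (EuclideanSpace.single i 1)) := fun i =>
    ((hcw i).mul (hcF i)).integrable_of_hasCompactSupport ((hFc' i).mul_left)
  have hint2 : ∀ i : Fin n,
      Integrable (fun x =>
        fderiv ℝ (fun y => fderiv ℝ w y (EuclideanSpace.single i 1)) x
          (EuclideanSpace.single i 1) * F x) := fun i =>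
    ((hcw2 i).mul hF.continuous).integrable_of_hasCompactSupport (hFc.mul_left)
  have hint3 : ∀ i : Fin n,
      Integrable (fun x => fderiv ℝ w x (EuclideanSpace.single i 1) * F x) := fun i =>
    ((hcw i).mul hF.continuous).integrable_of_hasCompactSupport (hFc.mul_left)
  calc ∫ x, ⟪gradient w x, gradient F x⟫_ℝ
      = ∫ x, ∑ i : Fin n, fderiv ℝ w x (EuclideanSpace.single i 1)
          * fderiv ℝ F x (EuclideanSpace.single i 1) := by
        simp_rw [inner_grad_grad]
    _ = ∑ i : Fin n, ∫ x, fderiv ℝ w x (EuclideanSpace.single i 1)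
          * fderiv ℝ F x (EuclideanSpace.single i 1) :=
        integral_finset_sum _ fun i _ => hint1 i
    _ = ∑ i : Fin n, -∫ x,
          fderiv ℝ (fun y => fderiv ℝ w y (EuclideanSpace.single i 1)) x
            (EuclideanSpace.single i 1) * F x := by
        refine Finset.sum_congr rfl fun i _ => ?_
        exact integral_mul_fderiv_eq_neg_fderiv_mul_of_integrable
          (hint2 i) (hint1 i) (hint3 i) (fun x _ => hdw i x) (fun x _ => hFd x)
    _ = ∫ x, (-lap w x) * F x := by
        simp_rw [← integral_neg]
        have hsum := integral_finset_sum (μ := volume) Finset.univ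
          (f := fun (i : Fin n) (x : E) =>
            -(fderiv ℝ (fun y => fderiv ℝ w y (EuclideanSpace.single i 1)) x
                (EuclideanSpace.single i 1) * F x))
          (fun i _ => (hint2 i).neg)
        rw [← hsum]
        refine integral_congr_ae (Filter.Eventually.of_forall fun x => ?_)
        simp [lap, Finset.sum_mul, neg_mul]

lemma continuous_gradient {f : E → ℝ} (hf : ContDiff ℝ 2 f) : Continuous (gradient f) := by
  have : Continuous fun x => (InnerProductSpace.toDual ℝ (EuclideanSpace ℝ (Fin n))).symm
      (fderiv ℝ f x) :=
    (InnerProductSpace.toDual ℝ (EuclideanSpace ℝ (Fin n))).symm.continuous.comp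
      (hf.continuous_fderiv two_ne_zero)
  exact this

lemma hcs_gradient {f : E → ℝ} (hf : HasCompactSupport f) : HasCompactSupport (gradient f) := by
  have h := (hf.fderiv ℝ).comp_left
    (g := fun L : (EuclideanSpace ℝ (Fin n)) →L[ℝ] ℝ =>
      (InnerProductSpace.toDual ℝ (EuclideanSpace ℝ (Fin n))).symm L) (by simp)
  exact h

lemma key (u v φ w g : E → ℝ) (hu : ContDiff ℝ 2 u) (hv : ContDiff ℝ 2 v)
    (hu0 : ∀ x, 0 < u x) (hv0 : ∀ x, 0 < v x)
    (hφ : ContDiff ℝ 2 φ) (hφc : HasCompactSupport φ)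
    (a b : ℝ) (hw : ContDiff ℝ 2 w) (hwg : ∀ x, -lap w x = g x) :
    a * (∫ x, u x ^ (a - 1) * v x ^ b * φ x * ⟪gradient u x, gradient w x⟫_ℝ)
      + b * (∫ x, u x ^ a * v x ^ (b - 1) * φ x * ⟪gradient v x, gradient w x⟫_ℝ)
      + (∫ x, u x ^ a * v x ^ b * ⟪gradient φ x, gradient w x⟫_ℝ)
    = ∫ x, g x * (u x ^ a * v x ^ b * φ x) := by
  set F : E → ℝ := fun x => u x ^ a * v x ^ b * φ x with hF
  have hud : Differentiable ℝ u := hu.differentiable two_ne_zero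
  have hvd : Differentiable ℝ v := hv.differentiable two_ne_zero
  have hφd : Differentiable ℝ φ := hφ.differentiable two_ne_zero
  -- derivative of F
  have huA : ∀ x, HasFDerivAt (fun y => u y ^ a)
      ((a * u x ^ (a - 1)) • fderiv ℝ u x) x := fun x =>
    (hasDerivAt_rpow_const (Or.inl (hu0 x).ne')).comp_hasFDerivAt x (hud x).hasFDerivAt
  have hvA : ∀ x, HasFDerivAt (fun y => v y ^ b)
      ((b * v x ^ (b - 1)) • fderiv ℝ v x) x := fun x =>
    (hasDerivAt_rpow_const (Or.inl (hv0 x).ne')).comp_hasFDerivAt x (hvd x).hasFDerivAt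
  have hFder : ∀ x, HasFDerivAt F
      ((u x ^ a * v x ^ b) • fderiv ℝ φ x +
        φ x • ((u x ^ a) • ((b * v x ^ (b - 1)) • fderiv ℝ v x)
          + (v x ^ b) • ((a * u x ^ (a - 1)) • fderiv ℝ u x))) x := fun x =>
    ((huA x).mul (hvA x)).mul (hφd x).hasFDerivAt
  -- pointwise identity
  have hpt : ∀ x, ⟪gradient w x, gradient F x⟫_ℝ =
      a * (u x ^ (a - 1) * v x ^ b * φ x * ⟪gradient u x, gradient w x⟫_ℝ)
      + b * (u x ^ a * v x ^ (b - 1) * φ x * ⟪gradient v x, gradient w x⟫_ℝ)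
      + u x ^ a * v x ^ b * ⟪gradient φ x, gradient w x⟫_ℝ := by
    intro x
    rw [real_inner_comm, inner_gradient, (hFder x).fderiv]
    simp only [ContinuousLinearMap.add_apply, ContinuousLinearMap.coe_smul',
      Pi.smul_apply, smul_eq_mul]
    rw [← inner_gradient u, ← inner_gradient v, ← inner_gradient φ]
    ring
  -- integrability
  have hgu := continuous_gradient hu
  have hgv := continuous_gradient hv
  have hgφ := continuous_gradient hφ
  have hgw := continuous_gradient hw
  have hcsgφ := hcs_gradient hφc
  have crpow : ∀ (f : E → ℝ), ContDiff ℝ 2 f → (∀ x, 0 < f x) → ∀ (c : ℝ),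
      Continuous fun x => f x ^ c := fun f hf h0 c =>
    (hf.rpow_const_of_ne (fun x => (h0 x).ne')).continuous
  have hI1 : Integrable (fun x =>
      u x ^ (a - 1) * v x ^ b * φ x * ⟪gradient u x, gradient w x⟫_ℝ) := by
    apply Continuous.integrable_of_hasCompactSupport
    · exact (((crpow u hu hu0 _).mul (crpow v hv hv0 _)).mul hφ.continuous).mul
        (hgu.inner hgw)
    · apply hφc.mono'
      intro x hx
      contrapose! hx
      have : φ x = 0 := by
        by_contra h
        exact hx (subset_tsupport _ h)
      simp [Function.mem_support, this]
  have hI2 : Integrable (fun x =>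
      u x ^ a * v x ^ (b - 1) * φ x * ⟪gradient v x, gradient w x⟫_ℝ) := by
    apply Continuous.integrable_of_hasCompactSupport
    · exact (((crpow u hu hu0 _).mul (crpow v hv hv0 _)).mul hφ.continuous).mul
        (hgv.inner hgw)
    · apply hφc.mono'
      intro x hx
      contrapose! hx
      have : φ x = 0 := by
        by_contra h
        exact hx (subset_tsupport _ h)
      simp [Function.mem_support, this]
  have hI3 : Integrable (fun x =>
      u x ^ a * v x ^ b * ⟪gradient φ x, gradient w x⟫_ℝ) := by
    apply Continuous.integrable_of_hasCompactSupport
    · exact ((crpow u hu hu0 _).mul (crpow v hv hv0 _)).mul (hgφ.inner hgw)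
    · apply hcsgφ.mono'
      intro x hx
      contrapose! hx
      have : gradient φ x = 0 := by
        by_contra h
        exact hx (subset_tsupport _ h)
      simp [Function.mem_support, this]
  -- contdiff of F
  have hFc1 : ContDiff ℝ 1 F :=
    (((hu.rpow_const_of_ne fun x => (hu0 x).ne').mul
      (hv.rpow_const_of_ne fun x => (hv0 x).ne')).mul hφ).of_le one_le_two
  have hFcs : HasCompactSupport F := hφc.mul_left
  calc a * (∫ x, u x ^ (a - 1) * v x ^ b * φ x * ⟪gradient u x, gradient w x⟫_ℝ)
      + b * (∫ x, u x ^ a * v x ^ (b - 1) * φ x * ⟪gradient v x, gradient w x⟫_ℝ)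
      + (∫ x, u x ^ a * v x ^ b * ⟪gradient φ x, gradient w x⟫_ℝ)
      = ∫ x, (a * (u x ^ (a - 1) * v x ^ b * φ x * ⟪gradient u x, gradient w x⟫_ℝ)
          + b * (u x ^ a * v x ^ (b - 1) * φ x * ⟪gradient v x, gradient w x⟫_ℝ)
          + u x ^ a * v x ^ b * ⟪gradient φ x, gradient w x⟫_ℝ) := by
        have h12 : Integrable (fun x =>
            a * (u x ^ (a - 1) * v x ^ b * φ x * ⟪gradient u x, gradient w x⟫_ℝ)
            + b * (u x ^ a * v x ^ (b - 1) * φ x * ⟪gradient v x, gradient w x⟫_ℝ)) :=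
          (hI1.const_mul a).add (hI2.const_mul b)
        rw [integral_add h12 hI3, integral_add (hI1.const_mul a) (hI2.const_mul b),
          integral_const_mul, integral_const_mul]
    _ = ∫ x, ⟪gradient w x, gradient F x⟫_ℝ := by
        refine integral_congr_ae (Filter.Eventually.of_forall fun x => ?_)
        exact (hpt x).symm
    _ = ∫ x, (-lap w x) * F x := ibp w F hw hFc1 hFcs
    _ = ∫ x, g x * (u x ^ a * v x ^ b * φ x) := by
        refine integral_congr_ae (Filter.Eventually.of_forall fun x => ?_)
        exact congrArg (fun t => t * (u x ^ a * v x ^ b * φ x)) (hwg x)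

lemma alg_s5 (r s I1 I2 J K1 K2 P1 P2 : ℝ) (hr1' : r+1 ≠ 0) (hr2' : r+2 ≠ 0)
    (hA : (r+1)*I1 + s*J + K1 = P1) (hB : (r+2)*J + (s-1)*I2 + K2 = P2) :
    I1 - s*(s-1)/((r+1)*(r+2))*I2
      = 1/(r+1)*P1 - s/((r+1)*(r+2))*P2 + (-(1/(r+1))*K1 + s/((r+1)*(r+2))*K2) := by
  field_simp
  linear_combination (r+2) * hA - s * hB

theorem estimates_transform (n : ℕ) (p q r s : ℝ) (hp : 0 < p) (hq : 0 < q)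
    (hr1 : r ≠ -1) (hr2 : r ≠ -2)
    (u v : EuclideanSpace ℝ (Fin n) → ℝ)
    (hu : ContDiff ℝ 2 u) (hv : ContDiff ℝ 2 v)
    (hu0 : ∀ x, 0 < u x) (hv0 : ∀ x, 0 < v x)
    (hue : ∀ x, -lap u x = v x ^ p) (hve : ∀ x, -lap v x = u x ^ q)
    (φ : EuclideanSpace ℝ (Fin n) → ℝ) (hφ : ContDiff ℝ 2 φ)
    (hφc : HasCompactSupport φ) :
    (∫ x, u x ^ r * v x ^ s * ‖gradient u x‖ ^ 2 * φ x)
      - s * (s - 1) / ((r + 1) * (r + 2)) *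
        (∫ x, u x ^ (r + 2) * v x ^ (s - 2) * ‖gradient v x‖ ^ 2 * φ x)
    = (1 / (r + 1)) * (∫ x, u x ^ (r + 1) * v x ^ (p + s) * φ x)
      - s / ((r + 1) * (r + 2)) * (∫ x, u x ^ (r + q + 2) * v x ^ (s - 1) * φ x)
      + (-(1 / (r + 1)) *
          (∫ x, u x ^ (r + 1) * v x ^ s * ⟪gradient u x, gradient φ x⟫_ℝ)
        + s / ((r + 1) * (r + 2)) *
          (∫ x, u x ^ (r + 2) * v x ^ (s - 1) *
            ⟪gradient v x, gradient φ x⟫_ℝ)) := by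
  have hA := key u v φ u (fun x => v x ^ p) hu hv hu0 hv0 hφ hφc (r + 1) s hu hue
  have hB := key u v φ v (fun x => u x ^ q) hu hv hu0 hv0 hφ hφc (r + 2) (s - 1) hv hve
  beta_reduce at hA hB
  -- rewrite the integrals in hA
  have eA1 : (∫ x, u x ^ (r + 1 - 1) * v x ^ s * φ x * ⟪gradient u x, gradient u x⟫_ℝ)
      = ∫ x, u x ^ r * v x ^ s * ‖gradient u x‖ ^ 2 * φ x := by
    refine integral_congr_ae (Filter.Eventually.of_forall fun x => ?_)
    beta_reduce
    rw [show r + 1 - 1 = r by ring, real_inner_self_eq_norm_sq]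
    ring
  have eA3 : (∫ x, u x ^ (r + 1) * v x ^ s * ⟪gradient φ x, gradient u x⟫_ℝ)
      = ∫ x, u x ^ (r + 1) * v x ^ s * ⟪gradient u x, gradient φ x⟫_ℝ := by
    refine integral_congr_ae (Filter.Eventually.of_forall fun x => ?_)
    beta_reduce
    rw [real_inner_comm]
  have eA4 : (∫ x, v x ^ p * (u x ^ (r + 1) * v x ^ s * φ x))
      = ∫ x, u x ^ (r + 1) * v x ^ (p + s) * φ x := by
    refine integral_congr_ae (Filter.Eventually.of_forall fun x => ?_)
    beta_reduce
    rw [Real.rpow_add (hv0 x)]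
    ring
  rw [eA1, eA3, eA4] at hA
  have eB1 : (∫ x, u x ^ (r + 2 - 1) * v x ^ (s - 1) * φ x * ⟪gradient u x, gradient v x⟫_ℝ)
      = ∫ x, u x ^ (r + 1) * v x ^ (s - 1) * φ x * ⟪gradient v x, gradient u x⟫_ℝ := by
    refine integral_congr_ae (Filter.Eventually.of_forall fun x => ?_)
    beta_reduce
    rw [show r + 2 - 1 = r + 1 by ring, real_inner_comm]
  have eB2 : (∫ x, u x ^ (r + 2) * v x ^ (s - 1 - 1) * φ x * ⟪gradient v x, gradient v x⟫_ℝ)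
      = ∫ x, u x ^ (r + 2) * v x ^ (s - 2) * ‖gradient v x‖ ^ 2 * φ x := by
    refine integral_congr_ae (Filter.Eventually.of_forall fun x => ?_)
    beta_reduce
    rw [show s - 1 - 1 = s - 2 by ring, real_inner_self_eq_norm_sq]
    ring
  have eB3 : (∫ x, u x ^ (r + 2) * v x ^ (s - 1) * ⟪gradient φ x, gradient v x⟫_ℝ)
      = ∫ x, u x ^ (r + 2) * v x ^ (s - 1) * ⟪gradient v x, gradient φ x⟫_ℝ := by
    refine integral_congr_ae (Filter.Eventually.of_forall fun x => ?_)
    beta_reduce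
    rw [real_inner_comm]
  have eB4 : (∫ x, u x ^ q * (u x ^ (r + 2) * v x ^ (s - 1) * φ x))
      = ∫ x, u x ^ (r + q + 2) * v x ^ (s - 1) * φ x := by
    refine integral_congr_ae (Filter.Eventually.of_forall fun x => ?_)
    beta_reduce
    conv_rhs => rw [show r + q + 2 = q + (r + 2) by ring, Real.rpow_add (hu0 x)]
    simp only [mul_assoc]
  rw [eB1, eB2, eB3, eB4] at hB
  have hr1' : r + 1 ≠ 0 := fun h => hr1 (by linarith)
  have hr2' : r + 2 ≠ 0 := fun h => hr2 (by linarith)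
  set I1 := ∫ x, u x ^ r * v x ^ s * ‖gradient u x‖ ^ 2 * φ x
  set I2 := ∫ x, u x ^ (r + 2) * v x ^ (s - 2) * ‖gradient v x‖ ^ 2 * φ x
  set J := ∫ x, u x ^ (r + 1) * v x ^ (s - 1) * φ x * ⟪gradient v x, gradient u x⟫_ℝ
  set K1 := ∫ x, u x ^ (r + 1) * v x ^ s * ⟪gradient u x, gradient φ x⟫_ℝ
  set K2 := ∫ x, u x ^ (r + 2) * v x ^ (s - 1) * ⟪gradient v x, gradient φ x⟫_ℝ
  set P1 := ∫ x, u x ^ (r + 1) * v x ^ (p + s) * φ x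
  set P2 := ∫ x, u x ^ (r + q + 2) * v x ^ (s - 1) * φ x
  exact alg_s5 r s I1 I2 J K1 K2 P1 P2 hr1' hr2' hA hB
end
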